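/- Let (𝒳, d) be a metric space, and let S̃ = S̃₊ ∪ S̃₋ be a finite labeled set of points with margin marg(S̃) = d(S̃₊, S̃₋) ≥ γ > 0, where both S̃₊ and S̃₋ are nonempty. Then there exists a 2-Lipschitz function f : 𝒳 → ℝ with f(x) = γ for all x ∈ S̃₊ and f(x) = −γ for all x ∈ S̃₋, such that for every x ∈ 𝒳 the nearest-neighbor classifier h_{S̃}(x) = sign(d(x, S̃₋) − d(x, S̃₊)) equals sign(f(x)) whenever d(x,S̃₊) ≠ d(x,S̃₋). (One may take f(x) = γ·(d(x,S̃₋) − d(x,S̃₊))/γ clipped appropriately; the diameter of 𝒳 is assumed at most 1.) -/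

import Mathlib

open Metric

theorem lipschitz_extension_of_separated_sample
    {𝒳 : Type*} [MetricSpace 𝒳]
    (hdiam : ∀ x y : 𝒳, dist x y ≤ 1)
    (P N : Finset 𝒳) (hP : P.Nonempty) (hN : N.Nonempty)
    (γ : ℝ) (hγ : 0 < γ)
    (hmarg : ∀ p ∈ P, ∀ q ∈ N, γ ≤ dist p q) :
    ∃ f : 𝒳 → ℝ,
      (∀ x y : 𝒳, |f x - f y| ≤ 2 * dist x y) ∧
      (∀ x ∈ P, f x = γ) ∧ (∀ x ∈ N, f x = -γ) ∧
      (∀ x : 𝒳, infDist x (↑N : Set 𝒳) ≠ infDist x (↑P : Set 𝒳) →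
        Real.sign (infDist x (↑N : Set 𝒳) - infDist x (↑P : Set 𝒳)) = Real.sign (f x)) := by
  set g : 𝒳 → ℝ := fun x => infDist x (↑N : Set 𝒳) - infDist x (↑P : Set 𝒳) with hg
  refine ⟨fun x => max (-γ) (min γ (g x)), ?_, ?_, ?_, ?_⟩
  · intro x y
    have h1 : |g x - g y| ≤ 2 * dist x y := by
      have hNl : |infDist x (↑N : Set 𝒳) - infDist y (↑N : Set 𝒳)| ≤ dist x y := by
        rw [abs_sub_le_iff]
        constructor <;> linarith [infDist_le_infDist_add_dist (x := x) (y := y) (s := (↑N : Set 𝒳)),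
          infDist_le_infDist_add_dist (x := y) (y := x) (s := (↑N : Set 𝒳)), dist_comm x y]
      have hPl : |infDist x (↑P : Set 𝒳) - infDist y (↑P : Set 𝒳)| ≤ dist x y := by
        rw [abs_sub_le_iff]
        constructor <;> linarith [infDist_le_infDist_add_dist (x := x) (y := y) (s := (↑P : Set 𝒳)),
          infDist_le_infDist_add_dist (x := y) (y := x) (s := (↑P : Set 𝒳)), dist_comm x y]
      calc |g x - g y| = |(infDist x (↑N : Set 𝒳) - infDist y (↑N : Set 𝒳))
            - (infDist x (↑P : Set 𝒳) - infDist y (↑P : Set 𝒳))| := by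
              show |(infDist x (↑N : Set 𝒳) - infDist x (↑P : Set 𝒳)) - (infDist y (↑N : Set 𝒳) - infDist y (↑P : Set 𝒳))| = _; ring_nf
        _ ≤ |infDist x (↑N : Set 𝒳) - infDist y (↑N : Set 𝒳)|
            + |infDist x (↑P : Set 𝒳) - infDist y (↑P : Set 𝒳)| := abs_sub _ _
        _ ≤ 2 * dist x y := by linarith
    calc |max (-γ) (min γ (g x)) - max (-γ) (min γ (g y))|
        ≤ max |(-γ) - (-γ)| |min γ (g x) - min γ (g y)| := abs_max_sub_max_le_max _ _ _ _
      _ ≤ max 0 |g x - g y| := by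
          apply max_le_max
          · simp
          · simpa using abs_min_sub_min_le_max γ (g x) γ (g y)
      _ ≤ 2 * dist x y := by
          rw [max_le_iff]
          exact ⟨by positivity, h1⟩
  · intro x hx
    have h0 : infDist x (↑P : Set 𝒳) = 0 := infDist_zero_of_mem (by exact_mod_cast hx)
    have hlb : γ ≤ infDist x (↑N : Set 𝒳) := by
      obtain ⟨q, hq, hqd⟩ := (N.finite_toSet.isCompact).exists_infDist_eq_dist
        (by exact_mod_cast hN) x
      rw [hqd]; exact hmarg x hx q (by exact_mod_cast hq)
    have hmin : min γ (g x) = γ := min_eq_left (by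
      show γ ≤ infDist x (↑N : Set 𝒳) - infDist x (↑P : Set 𝒳); rw [h0]; linarith)
    show max (-γ) (min γ (g x)) = γ
    rw [hmin]; exact max_eq_right (by linarith)
  · intro x hx
    have h0 : infDist x (↑N : Set 𝒳) = 0 := infDist_zero_of_mem (by exact_mod_cast hx)
    have hlb : γ ≤ infDist x (↑P : Set 𝒳) := by
      obtain ⟨q, hq, hqd⟩ := (P.finite_toSet.isCompact).exists_infDist_eq_dist
        (by exact_mod_cast hP) x
      rw [hqd, dist_comm]; exact hmarg q (by exact_mod_cast hq) x hx
    have hgx : g x ≤ -γ := by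
      show infDist x (↑N : Set 𝒳) - infDist x (↑P : Set 𝒳) ≤ -γ; rw [h0]; linarith
    show max (-γ) (min γ (g x)) = -γ
    rw [max_eq_left ((min_le_right _ _).trans hgx)]
  · intro x hx
    have hne : g x ≠ 0 := sub_ne_zero.mpr hx
    rcases lt_or_gt_of_ne hne with h | h
    · have hmax : max (-γ) (min γ (g x)) < 0 :=
        max_lt (by linarith) (min_lt_iff.mpr (Or.inr h))
      rw [Real.sign_of_neg h, Real.sign_of_neg hmax]
    · have hmax : 0 < max (-γ) (min γ (g x)) :=
        lt_max_iff.mpr (Or.inr (lt_min hγ h))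
      rw [Real.sign_of_pos h, Real.sign_of_pos hmax]
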